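/- For positive invertible operators A, B, any invertible bounded operator T, the transformer identity T* S(A|B) T = S(T*AT | T*BT) holds for the relative operator entropy. -/

import Mathlib

open scoped Real

variable {H : Type*} [NormedAddCommGroup H] [InnerProductSpace ℂ H] [CompleteSpace H]

/-- Square root via continuous functional calculus. -/
noncomputable def opSqrt (A : H →L[ℂ] H) : H →L[ℂ] H := cfc Real.sqrt A

/-- Real power via continuous functional calculus. -/
noncomputable def opRpow (A : H →L[ℂ] H) (p : ℝ) : H →L[ℂ] H :=
  cfc (fun x : ℝ => x ^ p) A

/-- Logarithm via continuous functional calculus. -/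
noncomputable def opLog (A : H →L[ℂ] H) : H →L[ℂ] H := cfc Real.log A

/-- Operator inverse (junk value `0` if not invertible). -/
noncomputable def opInv (A : H →L[ℂ] H) : H →L[ℂ] H := Ring.inverse A

/-- `A^{-1/2}`. -/
noncomputable def opInvSqrt (A : H →L[ℂ] H) : H →L[ℂ] H := opInv (opSqrt A)

/-- Weighted arithmetic mean `A ∇ₚ B`. -/
noncomputable def wNabla (p : ℝ) (A B : H →L[ℂ] H) : H →L[ℂ] H := (1 - p) • A + p • B

/-- Weighted harmonic mean `A !ₚ B`. -/
noncomputable def wHarm (p : ℝ) (A B : H →L[ℂ] H) : H →L[ℂ] H :=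
  opInv ((1 - p) • opInv A + p • opInv B)

/-- Weighted geometric mean `A ♯ₚ B`. -/
noncomputable def wGeom (p : ℝ) (A B : H →L[ℂ] H) : H →L[ℂ] H :=
  opSqrt A * opRpow (opInvSqrt A * B * opInvSqrt A) p * opSqrt A

/-- Relative operator entropy `S(A|B)`. -/
noncomputable def relEntropy (A B : H →L[ℂ] H) : H →L[ℂ] H :=
  opSqrt A * opLog (opInvSqrt A * B * opInvSqrt A) * opSqrt A

/-- Furuta parametric relative operator entropy `Sₚ(A|B)`. -/
noncomputable def furutaEntropy (p : ℝ) (A B : H →L[ℂ] H) : H →L[ℂ] H :=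
  opSqrt A * (opRpow (opInvSqrt A * B * opInvSqrt A) p *
    opLog (opInvSqrt A * B * opInvSqrt A)) * opSqrt A

/-- Tsallis relative operator entropy `Tₚ(A|B)`. -/
noncomputable def tsallisEntropy (p : ℝ) (A B : H →L[ℂ] H) : H →L[ℂ] H :=
  p⁻¹ • (wGeom p A B - A)

section Aux

variable {H : Type*} [NormedAddCommGroup H] [InnerProductSpace ℂ H] [CompleteSpace H]

/-- Conjugation by a unitary element as a star algebra homomorphism. -/
noncomputable def conjStarAlgHom (u : H →L[ℂ] H) (hu : star u * u = 1) (hu' : u * star u = 1) :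
    (H →L[ℂ] H) →⋆ₐ[ℂ] (H →L[ℂ] H) where
  toFun x := star u * x * u
  map_one' := show star u * 1 * u = 1 by rw [mul_one, hu]
  map_mul' x y := by
    have hc : ∀ z : H →L[ℂ] H, u * (star u * z) = z := fun z => by
      rw [← mul_assoc, hu', one_mul]
    calc star u * (x * y) * u = star u * (x * (u * (star u * (y * u)))) := by
          rw [hc]; simp only [mul_assoc]
      _ = (star u * x * u) * (star u * y * u) := by simp only [mul_assoc]
  map_zero' := by simp
  map_add' x y := by noncomm_ring
  commutes' c := by
    simp only [Algebra.algebraMap_eq_smul_one, mul_smul_comm, smul_mul_assoc, mul_one, hu]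
  map_star' x := by simp only [star_mul, star_star, mul_assoc]

lemma isSelfAdjoint_opSqrt (A : H →L[ℂ] H) : IsSelfAdjoint (opSqrt A) :=
  cfc_predicate _ _

lemma opSqrt_mul_self (A : H →L[ℂ] H) (hA : 0 ≤ A) : opSqrt A * opSqrt A = A := by
  rw [opSqrt, ← cfc_mul ..]
  conv_rhs => rw [← cfc_id (R := ℝ) A]
  exact cfc_congr fun x hx => Real.mul_self_sqrt (spectrum_nonneg_of_nonneg hA hx)

lemma isUnit_opSqrt (A : H →L[ℂ] H) (hA : 0 ≤ A) (hA' : IsUnit A) : IsUnit (opSqrt A) := by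
  rw [opSqrt]
  refine isUnit_cfc _ _ Real.continuous_sqrt.continuousOn (.of_nonneg hA) fun x hx => ?_
  have h0 : x ≠ 0 := fun h => (spectrum.zero_notMem_iff ℝ).mpr hA' (h ▸ hx)
  exact Real.sqrt_ne_zero'.mpr
    (lt_of_le_of_ne (spectrum_nonneg_of_nonneg hA hx) (Ne.symm h0))

end Aux

/-- The transformer identity `T* S(A|B) T = S(T*AT | T*BT)` for positive
invertible `A, B` and invertible bounded `T`. -/
theorem relEntropy_transformer (A B T : H →L[ℂ] H) (hA : 0 ≤ A) (hA' : IsUnit A)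
    (hB : 0 ≤ B) (hB' : IsUnit B) (hT : IsUnit T) :
    ContinuousLinearMap.adjoint T * relEntropy A B * T =
      relEntropy (ContinuousLinearMap.adjoint T * A * T)
        (ContinuousLinearMap.adjoint T * B * T) := by
  rw [← ContinuousLinearMap.star_eq_adjoint]
  -- abbreviations and basic facts
  set a := opSqrt A with ha_def
  have ha_sa : IsSelfAdjoint a := isSelfAdjoint_opSqrt A
  have ha_sq : a * a = A := opSqrt_mul_self A hA
  have ha_unit : IsUnit a := isUnit_opSqrt A hA hA'
  set ia := opInvSqrt A with hia_def
  have hia_eq : ia = Ring.inverse a := rfl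
  have hia_sa : IsSelfAdjoint ia := by
    rw [hia_eq, IsSelfAdjoint, ← Ring.inverse_star, ha_sa.star_eq]
  have hia_unit : IsUnit ia := hia_eq ▸ isUnit_ringInverse.mpr ha_unit
  have ha_ia : a * ia = 1 := by rw [hia_eq, Ring.mul_inverse_cancel _ ha_unit]
  have hia_a : ia * a = 1 := by rw [hia_eq, Ring.inverse_mul_cancel _ ha_unit]
  -- the transformed operators
  have hA'pos : 0 ≤ star T * A * T := star_left_conjugate_nonneg hA T
  have hA'unit : IsUnit (star T * A * T) := (hT.star.mul hA').mul hT
  set b := opSqrt (star T * A * T) with hb_def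
  have hb_sa : IsSelfAdjoint b := isSelfAdjoint_opSqrt _
  have hb_sq : b * b = star T * A * T := opSqrt_mul_self _ hA'pos
  have hb_unit : IsUnit b := isUnit_opSqrt _ hA'pos hA'unit
  set ib := opInvSqrt (star T * A * T) with hib_def
  have hib_eq : ib = Ring.inverse b := rfl
  have hib_sa : IsSelfAdjoint ib := by
    rw [hib_eq, IsSelfAdjoint, ← Ring.inverse_star, hb_sa.star_eq]
  have hib_unit : IsUnit ib := hib_eq ▸ isUnit_ringInverse.mpr hb_unit
  have hb_ib : b * ib = 1 := by rw [hib_eq, Ring.mul_inverse_cancel _ hb_unit]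
  have hib_b : ib * b = 1 := by rw [hib_eq, Ring.inverse_mul_cancel _ hb_unit]
  -- the unitary u
  set u := a * T * ib with hu_def
  have hu_star : star u = ib * star T * a := by
    rw [hu_def, star_mul, star_mul, hib_sa.star_eq, ha_sa.star_eq, mul_assoc]
  have hu_unit : IsUnit u := (ha_unit.mul hT).mul hib_unit
  have huu : star u * u = 1 := by
    have h1 : star u * u = ib * (star T * (a * a) * T) * ib := by
      rw [hu_star, hu_def]; noncomm_ring
    rw [h1, ha_sq, ← hb_sq]
    calc ib * (b * b) * ib = (ib * b) * (b * ib) := by noncomm_ring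
      _ = 1 := by rw [hib_b, hb_ib, one_mul]
  have huu' : u * star u = 1 := by
    obtain ⟨v, hv⟩ := hu_unit
    have hs : star u = (↑v⁻¹ : H →L[ℂ] H) := by
      have : star u * (↑v * ↑v⁻¹ : H →L[ℂ] H) = (↑v⁻¹ : H →L[ℂ] H) := by
        rw [← mul_assoc, hv, huu, one_mul]
      rwa [v.mul_inv, mul_one] at this
    rw [hs, ← hv, v.mul_inv]
  -- the inner operator X
  set X := ia * B * ia with hX_def
  have hX_sa : IsSelfAdjoint X := by
    have := (IsSelfAdjoint.of_nonneg hB).conjugate' ia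
    rwa [hia_sa.star_eq, ← hX_def] at this
  have hX_unit : IsUnit X := (hia_unit.mul hB').mul hia_unit
  -- the key conjugation identity
  have key : star u * X * u = ib * (star T * B * T) * ib := by
    have h1 : star u * X * u = ib * star T * ((a * ia) * B * (ia * a)) * T * ib := by
      rw [hu_star, hu_def, hX_def]; noncomm_ring
    rw [h1, ha_ia, hia_a, one_mul, mul_one]; noncomm_ring
  -- log commutes with unitary conjugation
  have hφX_sa : IsSelfAdjoint (star u * X * u) := hX_sa.conjugate' u
  have hcont : ContinuousOn Real.log (spectrum ℝ X) := by
    refine Real.continuousOn_log.mono fun x hx => ?_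
    simp only [Set.mem_compl_iff, Set.mem_singleton_iff]
    exact fun h => (spectrum.zero_notMem_iff ℝ).mpr hX_unit (h ▸ hx)
  have hlog : opLog (star u * X * u) = star u * opLog X * u := by
    have hmap := StarAlgHom.map_cfc (S := ℂ) (conjStarAlgHom u huu huu') Real.log X
      hcont (by exact continuous_const.mul continuous_id |>.mul continuous_const)
      hX_sa hφX_sa
    have happ : ∀ z, (conjStarAlgHom u huu huu') z = star u * z * u := fun _ => rfl
    rw [opLog, opLog, ← happ X, ← hmap]
    exact happ _
  -- assemble
  show star T * (a * opLog X * a) * T = b * opLog (ib * (star T * B * T) * ib) * b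
  rw [← key, hlog]
  have hbsu : b * star u = star T * a := by
    rw [hu_star]
    calc b * (ib * star T * a) = (b * ib) * (star T * a) := by noncomm_ring
      _ = star T * a := by rw [hb_ib, one_mul]
  have hub : u * b = a * T := by
    rw [hu_def]
    calc a * T * ib * b = a * T * (ib * b) := by rw [mul_assoc]
      _ = a * T := by rw [hib_b, mul_one]
  calc star T * (a * opLog X * a) * T
      = (star T * a) * opLog X * (a * T) := by noncomm_ring
    _ = (b * star u) * opLog X * (u * b) := by rw [hbsu, hub]
    _ = b * (star u * opLog X * u) * b := by noncomm_ring
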